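/- Let X be a real random variable with Gaussian law of mean m ∈ ℝ and variance v > 0. Then the undersupply penalty function g(y) = E[(X − y)² | X > y] = v·[(1 + a²) − a·φ(a)/(1 − Φ(a))] with a = (y − m)/√v is strictly decreasing in y on ℝ. -/

import Mathlib

open MeasureTheory ProbabilityTheory Set Real
open scoped NNReal ENNReal

namespace GaussianUndersupplyAux

/-- Tail integral of the Gaussian pdf. -/
noncomputable def D (m : ℝ) (v : ℝ≥0) (y : ℝ) : ℝ :=
  ∫ x in Ioi y, gaussianPDFReal m v x

/-- Tail second-moment integral of the Gaussian pdf. -/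
noncomputable def N (m : ℝ) (v : ℝ≥0) (y : ℝ) : ℝ :=
  ∫ x in Ioi y, (x - y) ^ 2 * gaussianPDFReal m v x

lemma shift_pre (a : ℝ) : (fun s : ℝ => s + a) ⁻¹' (Ioi a) = Ioi (0:ℝ) := by
  ext s; simp

lemma integral_Ioi_shift (F : ℝ → ℝ) (a : ℝ) :
    ∫ x in Ioi a, F x = ∫ s in Ioi (0:ℝ), F (s + a) := by
  have h := measurePreserving_add_right (volume : Measure ℝ) a
  have he : MeasurableEmbedding (fun s : ℝ => s + a) :=
    (Homeomorph.addRight a).measurableEmbedding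
  rw [← h.setIntegral_preimage_emb he F (Ioi a), shift_pre a]

lemma integrableOn_Ioi_shift {F : ℝ → ℝ} (a : ℝ) (hF : Integrable F) :
    IntegrableOn (fun s => F (s + a)) (Ioi (0:ℝ)) := by
  have h := measurePreserving_add_right (volume : Measure ℝ) a
  have he : MeasurableEmbedding (fun s : ℝ => s + a) :=
    (Homeomorph.addRight a).measurableEmbedding
  have := (h.integrableOn_comp_preimage he (f := F) (s := Ioi a)).mpr hF.integrableOn
  rwa [shift_pre a] at this

variable {m : ℝ} {v : ℝ≥0}

lemma integrable_sq_pdf (hv : v ≠ 0) (y : ℝ) :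
    Integrable (fun x => (x - y) ^ 2 * gaussianPDFReal m v x) := by
  have hvpos : (0:ℝ) < v := by positivity
  set b : ℝ := (2 * (v:ℝ))⁻¹ with hb
  have hbpos : 0 < b := by rw [hb]; positivity
  have h0 : Integrable (fun u : ℝ => rexp (-b * u ^ 2)) := integrable_exp_neg_mul_sq hbpos
  have h1 : Integrable (fun u : ℝ => u * rexp (-b * u ^ 2)) := integrable_mul_exp_neg_mul_sq hbpos
  have h2 : Integrable (fun u : ℝ => u ^ 2 * rexp (-b * u ^ 2)) := by
    have := integrable_rpow_mul_exp_neg_mul_sq hbpos (s := 2) (by norm_num)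
    simpa [Real.rpow_two] using this
  have hbase : Integrable (fun u : ℝ => (u + (m - y)) ^ 2 * rexp (-b * u ^ 2)) := by
    have heq : (fun u : ℝ => (u + (m - y)) ^ 2 * rexp (-b * u ^ 2))
        = fun u => u ^ 2 * rexp (-b * u ^ 2) +
            ((2 * (m - y)) * (u * rexp (-b * u ^ 2)) + (m - y) ^ 2 * rexp (-b * u ^ 2)) := by
      funext u; ring
    rw [heq]
    exact h2.add ((h1.const_mul _).add (h0.const_mul _))
  have hshift : Integrable (fun x : ℝ => ((x - m) + (m - y)) ^ 2 * rexp (-b * (x - m) ^ 2)) := by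
    have h := measurePreserving_sub_right (volume : Measure ℝ) m
    exact (h.integrable_comp hbase.1).mpr hbase
  have heq2 : (fun x : ℝ => (x - y) ^ 2 * gaussianPDFReal m v x)
      = fun x => (√(2 * π * (v:ℝ)))⁻¹ * (((x - m) + (m - y)) ^ 2 * rexp (-b * (x - m) ^ 2)) := by
    funext x
    have hexp : -(x - m) ^ 2 / (2 * (v:ℝ)) = -b * (x - m) ^ 2 := by rw [hb]; ring
    rw [gaussianPDFReal, hexp]; ring
  rw [heq2]
  exact hshift.const_mul _

lemma D_pos (hv : v ≠ 0) (y : ℝ) : 0 < D m v y := by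
  rw [D, setIntegral_pos_iff_support_of_nonneg_ae
    (ae_of_all _ fun x => gaussianPDFReal_nonneg m v x)
    (integrable_gaussianPDFReal m v).integrableOn]
  have hsub : Ioi y ⊆ Function.support (gaussianPDFReal m v) :=
    fun x _ => (gaussianPDFReal_pos m v x hv).ne'
  rw [inter_eq_right.mpr hsub, Real.volume_Ioi]
  exact ENNReal.zero_lt_top

lemma key (hv : v ≠ 0) {a b : ℝ} (hab : a < b) :
    N m v b * D m v a < N m v a * D m v b := by
  have hvpos : (0:ℝ) < v := by positivity
  set f := gaussianPDFReal m v with hf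
  have hfpos : ∀ x, 0 < f x := fun x => gaussianPDFReal_pos m v x hv
  have hfint : Integrable f := integrable_gaussianPDFReal m v
  set Da := D m v a with hDa'
  set Db := D m v b with hDb'
  have hDa0 : 0 < Da := D_pos hv a
  have hDb0 : 0 < Db := D_pos hv b
  -- shifted representations
  have hDa : Da = ∫ s in Ioi (0:ℝ), f (s + a) := integral_Ioi_shift f a
  have hDb : Db = ∫ s in Ioi (0:ℝ), f (s + b) := integral_Ioi_shift f b
  have hNrep : ∀ y : ℝ, N m v y = ∫ s in Ioi (0:ℝ), s ^ 2 * f (s + y) := by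
    intro y
    rw [N, integral_Ioi_shift]
    refine setIntegral_congr_fun measurableSet_Ioi fun s _ => ?_
    simp [add_sub_cancel_right, hf]
  have Ifa : IntegrableOn (fun s => f (s + a)) (Ioi (0:ℝ)) := integrableOn_Ioi_shift a hfint
  have Ifb : IntegrableOn (fun s => f (s + b)) (Ioi (0:ℝ)) := integrableOn_Ioi_shift b hfint
  have I2a : IntegrableOn (fun s => s ^ 2 * f (s + a)) (Ioi (0:ℝ)) := by
    have := integrableOn_Ioi_shift a (integrable_sq_pdf (m := m) hv a)
    simpa [add_sub_cancel_right] using this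
  have I2b : IntegrableOn (fun s => s ^ 2 * f (s + b)) (Ioi (0:ℝ)) := by
    have := integrableOn_Ioi_shift b (integrable_sq_pdf (m := m) hv b)
    simpa [add_sub_cancel_right] using this
  have hvne : (v:ℝ) ≠ 0 := ne_of_gt hvpos
  -- likelihood ratio
  set q : ℝ → ℝ := fun s => ((s + b - m) ^ 2 - (s + a - m) ^ 2) / (2 * (v:ℝ)) with hq
  have hfq : ∀ s : ℝ, f (s + a) = rexp (q s) * f (s + b) := by
    intro s
    rw [hf, gaussianPDFReal, gaussianPDFReal,
      show (-(s + a - m) ^ 2 / (2 * (v:ℝ))) = q s + -(s + b - m) ^ 2 / (2 * (v:ℝ)) by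
        rw [hq]; ring,
      Real.exp_add]
    ring
  have hqlin : ∀ s : ℝ, q s = ((b - a) / v) * s + q 0 := by
    intro s
    show ((s + b - m) ^ 2 - (s + a - m) ^ 2) / (2 * (v:ℝ))
        = ((b - a) / (v:ℝ)) * s + ((0 + b - m) ^ 2 - (0 + a - m) ^ 2) / (2 * (v:ℝ))
    field_simp
    ring
  have hkpos : 0 < (b - a) / (v:ℝ) := by
    apply div_pos (by linarith) hvpos
  set L := Real.log (Da / Db) with hL
  set c₀ : ℝ := (L - q 0) / ((b - a) / v) with hc₀
  have hqgt : ∀ s : ℝ, c₀ < s → L < q s := by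
    intro s hs
    rw [hqlin s]
    rw [hc₀] at hs
    have h2 : L - q 0 < s * ((b - a) / (v:ℝ)) := (div_lt_iff₀ hkpos).mp hs
    linarith [mul_comm s ((b - a) / (v:ℝ))]
  have hqlt : ∀ s : ℝ, s < c₀ → q s < L := by
    intro s hs
    rw [hqlin s]
    rw [hc₀] at hs
    have h2 : s * ((b - a) / (v:ℝ)) < L - q 0 := (lt_div_iff₀ hkpos).mp hs
    linarith [mul_comm s ((b - a) / (v:ℝ))]
  have hexpL : rexp L = Da / Db := Real.exp_log (div_pos hDa0 hDb0)
  -- sign of w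
  set w : ℝ → ℝ := fun s => f (s + a) * Db - f (s + b) * Da with hw
  have hwpos : ∀ s : ℝ, c₀ < s → 0 < w s := by
    intro s hs
    have h1 : rexp L < rexp (q s) := Real.exp_lt_exp.mpr (hqgt s hs)
    rw [hexpL, div_lt_iff₀ hDb0] at h1
    have : w s = rexp (q s) * f (s + b) * Db - f (s + b) * Da := by rw [hw, ← hfq]
    rw [this]
    have := hfpos (s + b)
    nlinarith
  have hwneg : ∀ s : ℝ, s < c₀ → w s < 0 := by
    intro s hs
    have h1 : rexp (q s) < rexp L := Real.exp_lt_exp.mpr (hqlt s hs)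
    rw [hexpL, lt_div_iff₀ hDb0] at h1
    have : w s = rexp (q s) * f (s + b) * Db - f (s + b) * Da := by rw [hw, ← hfq]
    rw [this]
    have := hfpos (s + b)
    nlinarith
  set c : ℝ := max c₀ 0 with hc
  have hc0 : 0 ≤ c := le_max_right _ _
  set W : ℝ → ℝ := fun s => (s ^ 2 - c ^ 2) * w s with hW
  have hWnonneg : ∀ s : ℝ, s ∈ Ioi (0:ℝ) → 0 ≤ W s := by
    intro s hs
    have hs0 : 0 < s := mem_Ioi.mp hs
    show 0 ≤ (s ^ 2 - c ^ 2) * w s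
    rcases lt_trichotomy s c with h | h | h
    · have hcc : c = c₀ := by
        rcases le_or_gt c₀ 0 with h1 | h1
        · exfalso
          rw [hc, max_eq_right h1] at h
          linarith
        · rw [hc, max_eq_left h1.le]
      have hwn : w s < 0 := hwneg s (by rw [hcc] at h; exact h)
      have hsq : s ^ 2 - c ^ 2 < 0 := by nlinarith
      exact le_of_lt (mul_pos_of_neg_of_neg hsq hwn)
    · rw [h]; simp
    · have hwp : 0 < w s := hwpos s (lt_of_le_of_lt (le_max_left _ _) h)
      have hsq : 0 < s ^ 2 - c ^ 2 := by nlinarith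
      exact le_of_lt (mul_pos hsq hwp)
  have hWpos : ∀ s : ℝ, s ∈ Ioi (c + 1) → 0 < W s := by
    intro s hs
    have hs' : c < s := by have := mem_Ioi.mp hs; linarith
    have hwp : 0 < w s := hwpos s (lt_of_le_of_lt (le_max_left _ _) hs')
    have hsq : 0 < s ^ 2 - c ^ 2 := by nlinarith
    exact mul_pos hsq hwp
  -- integrability of W
  have hWeq : W = fun s => (Db * (s ^ 2 * f (s + a)) - Da * (s ^ 2 * f (s + b)))
      - ((c ^ 2 * Db) * f (s + a) - (c ^ 2 * Da) * f (s + b)) := by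
    funext s; rw [hW, hw]; ring
  have IW : IntegrableOn W (Ioi (0:ℝ)) := by
    rw [hWeq]
    exact ((I2a.const_mul Db).sub (I2b.const_mul Da)).sub
      ((Ifa.const_mul (c ^ 2 * Db)).sub (Ifb.const_mul (c ^ 2 * Da)))
  -- positivity of the integral
  have hpos : 0 < ∫ s in Ioi (0:ℝ), W s := by
    rw [setIntegral_pos_iff_support_of_nonneg_ae
      ((ae_restrict_iff' measurableSet_Ioi).2 (ae_of_all _ hWnonneg)) IW]
    have hsub : Ioi (c + 1) ⊆ Function.support W ∩ Ioi 0 := by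
      intro s hs
      refine ⟨(hWpos s hs).ne', ?_⟩
      have := mem_Ioi.mp hs; exact mem_Ioi.mpr (by linarith)
    refine lt_of_lt_of_le ?_ (measure_mono hsub)
    rw [Real.volume_Ioi]
    exact ENNReal.zero_lt_top
  -- compute the integral
  have hcongr : ∫ s in Ioi (0:ℝ), W s
      = ∫ s in Ioi (0:ℝ), ((Db * (s ^ 2 * f (s + a)) - Da * (s ^ 2 * f (s + b)))
          - ((c ^ 2 * Db) * f (s + a) - (c ^ 2 * Da) * f (s + b))) := by
    refine setIntegral_congr_fun measurableSet_Ioi fun s _ => ?_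
    show (s ^ 2 - c ^ 2) * w s = _
    rw [hw]
    ring
  have hcalc : ∫ s in Ioi (0:ℝ), W s
      = (Db * N m v a - Da * N m v b) - ((c ^ 2 * Db) * Da - (c ^ 2 * Da) * Db) := by
    have IA : IntegrableOn
        (fun s => Db * (s ^ 2 * f (s + a)) - Da * (s ^ 2 * f (s + b))) (Ioi (0:ℝ)) :=
      (I2a.const_mul Db).sub (I2b.const_mul Da)
    have IB : IntegrableOn
        (fun s => (c ^ 2 * Db) * f (s + a) - (c ^ 2 * Da) * f (s + b)) (Ioi (0:ℝ)) :=
      (Ifa.const_mul (c ^ 2 * Db)).sub (Ifb.const_mul (c ^ 2 * Da))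
    rw [hcongr, integral_sub IA IB,
      integral_sub (I2a.const_mul Db) (I2b.const_mul Da),
      integral_sub (Ifa.const_mul (c ^ 2 * Db)) (Ifb.const_mul (c ^ 2 * Da)),
      integral_const_mul, integral_const_mul, integral_const_mul, integral_const_mul,
      ← hNrep a, ← hNrep b, ← hDa, ← hDb]
  rw [hcalc] at hpos
  have h0 : (c ^ 2 * Db) * Da - (c ^ 2 * Da) * Db = 0 := by ring
  have h1 : Db * N m v a = N m v a * Db := mul_comm _ _
  have h2 : Da * N m v b = N m v b * Da := mul_comm _ _
  linarith

end GaussianUndersupplyAux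

open GaussianUndersupplyAux

/-- For a Gaussian random variable `X` with mean `m` and variance `v > 0`, the
undersupply penalty `g(y) = E[(X − y)² | X > y] = E[(X − y)²·1_{X > y}]/P(X > y)`
is strictly decreasing in `y` on `ℝ`. -/
theorem gaussian_undersupply_penalty_strictAnti {Ω : Type*} [MeasureSpace Ω]
    (P : Measure Ω) [IsProbabilityMeasure P]
    (X : Ω → ℝ) (hX : Measurable X) (m : ℝ) (v : ℝ≥0) (hv : 0 < v)
    (hlaw : Measure.map X P = gaussianReal m v)
    (g : ℝ → ℝ)
    (hg : ∀ y, g y =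
      (∫ ω in {ω | y < X ω}, (X ω - y) ^ 2 ∂P) / (P {ω | y < X ω}).toReal) :
    StrictAnti g := by
  have hv' : v ≠ 0 := hv.ne'
  have hgND : ∀ y, g y = N m v y / D m v y := by
    intro y
    have hset : {ω | y < X ω} = X ⁻¹' (Ioi y) := rfl
    have hP : (P {ω | y < X ω}).toReal = D m v y := by
      rw [hset, ← Measure.map_apply hX measurableSet_Ioi, hlaw,
        gaussianReal_apply_eq_integral m hv' (Ioi y),
        ENNReal.toReal_ofReal
          (setIntegral_nonneg measurableSet_Ioi fun x _ => gaussianPDFReal_nonneg m v x)]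
      rfl
    have hI : (∫ ω in {ω | y < X ω}, (X ω - y) ^ 2 ∂P) = N m v y := by
      rw [hset]
      have hmap := setIntegral_map (μ := P) (g := X) (f := fun x : ℝ => (x - y) ^ 2)
        (s := Ioi y) measurableSet_Ioi
        ((continuous_id.sub continuous_const).pow 2).aestronglyMeasurable
        hX.aemeasurable
      rw [← hmap, hlaw, gaussianReal_of_var_ne_zero m hv']
      have hwd : (volume.withDensity (gaussianPDF m v))
          = volume.withDensity (fun x => ((gaussianPDFReal m v x).toNNReal : ℝ≥0∞)) := rfl
      rw [hwd, setIntegral_withDensity_eq_setIntegral_smul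
        (measurable_gaussianPDFReal m v).real_toNNReal _ measurableSet_Ioi]
      refine setIntegral_congr_fun measurableSet_Ioi fun x _ => ?_
      simp [NNReal.smul_def, Real.coe_toNNReal _ (gaussianPDFReal_nonneg m v x), mul_comm]
    rw [hg y, hP, hI]
  intro a b hab
  rw [hgND a, hgND b, div_lt_div_iff₀ (D_pos hv' b) (D_pos hv' a)]
  exact key hv' hab
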